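/- Let m ∈ ℤ² with β_m ≠ 0 and let p_m ∈ ℂ³ with p_m ≠ 0. Then there do not exist H ∈ ℝ and coefficients (E_n)_{n∈ℤ²} ⊆ ℂ³ with Σ_n |E_n| e^{−Im(β_n) H'} < ∞ for every H' > H such that p_m e^{i(α_m·x − β_m x₃)} = Σ_{n∈ℤ²} E_n e^{i(α_n·x + β_n x₃)} for all x with x₃ > H. In other words, a nonzero downward-propagating (or downward-evanescent) plane-wave mode cannot coincide on any upper half-space with a convergent outgoing Rayleigh series. (This fact yields the contradiction concluding the proof of the uniqueness theorem for the grating profile: the total field E^i + E^s cannot vanish identically in Ω₀.) -/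

import Mathlib

noncomputable section

open MeasureTheory Real Set

/-- Points of `ℝ³`. -/
abbrev V3 := Fin 3 → ℝ
/-- Vectors of `ℂ³`. -/
abbrev C3 := Fin 3 → ℂ

/-- The bilinear (unconjugated) dot product on `ℂ³`. -/
def cdot (a b : C3) : ℂ := a 0 * b 0 + a 1 * b 1 + a 2 * b 2

/-- The Euclidean dot product on `ℝ³`. -/
def rdot (a x : V3) : ℝ := a 0 * x 0 + a 1 * x 1 + a 2 * x 2

/-- The cross product, extended bilinearly to `ℂ³`. -/
def cross (a b : C3) : C3 :=
  ![a 1 * b 2 - a 2 * b 1, a 2 * b 0 - a 0 * b 2, a 0 * b 1 - a 1 * b 0]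

/-- Inclusion `ℝ³ ⊆ ℂ³`. -/
def toC3 (v : V3) : C3 := fun i => (v i : ℂ)

/-- Standard basis of `ℝ³`. -/
def stdR (j : Fin 3) : V3 := fun k => if k = j then 1 else 0

/-- Standard basis of `ℂ³`. -/
def stdC (j : Fin 3) : C3 := fun k => if k = j then 1 else 0

/-- The Euclidean norm on `ℝ³`. -/
def enorm3 (v : V3) : ℝ := Real.sqrt (rdot v v)

/-- The squared Hermitian norm on `ℂ³`. -/
def hnormSq (a : C3) : ℝ := Complex.normSq (a 0) + Complex.normSq (a 1) + Complex.normSq (a 2)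

/-- Partial derivative `∂_j F` of a scalar field. -/
def pd (j : Fin 3) (F : V3 → ℂ) (x : V3) : ℂ := fderiv ℝ F x (stdR j)

/-- curl of a `ℂ³`-valued field on `ℝ³`. -/
def curl3 (E : V3 → C3) (x : V3) : C3 :=
  ![pd 1 (fun y => E y 2) x - pd 2 (fun y => E y 1) x,
    pd 2 (fun y => E y 0) x - pd 0 (fun y => E y 2) x,
    pd 0 (fun y => E y 1) x - pd 1 (fun y => E y 0) x]

/-- divergence of a `ℂ³`-valued field on `ℝ³`. -/
def div3 (E : V3 → C3) (x : V3) : ℂ :=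
  pd 0 (fun y => E y 0) x + pd 1 (fun y => E y 1) x + pd 2 (fun y => E y 2) x

/-- Laplacian of a scalar field on `ℝ³`. -/
def lap3 (F : V3 → ℂ) (x : V3) : ℂ :=
  pd 0 (pd 0 F) x + pd 1 (pd 1 F) x + pd 2 (pd 2 F) x

/-- `α_n = (α₁+n₁, α₂+n₂, 0)`. -/
def alphaN (α : ℝ × ℝ) (n : ℤ × ℤ) : V3 := ![α.1 + n.1, α.2 + n.2, 0]

/-- `β_n = (k₀²-|α_n|²)^{1/2}` if `|α_n|² ≤ k₀²`, and `i(|α_n|²-k₀²)^{1/2}` otherwise. -/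
def betaN (k₀ : ℝ) (α : ℝ × ℝ) (n : ℤ × ℤ) : ℂ :=
  if (α.1 + n.1) ^ 2 + (α.2 + n.2) ^ 2 ≤ k₀ ^ 2 then
    ((Real.sqrt (k₀ ^ 2 - ((α.1 + n.1) ^ 2 + (α.2 + n.2) ^ 2)) : ℝ) : ℂ)
  else Complex.I * ((Real.sqrt ((α.1 + n.1) ^ 2 + (α.2 + n.2) ^ 2 - k₀ ^ 2) : ℝ) : ℂ)

/-- `E` is α-quasi-periodic on the set `D`. -/
def QPOn (α : ℝ × ℝ) (D : Set V3) (E : V3 → C3) : Prop :=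
  ∀ x ∈ D,
    E (x + (2 * π) • stdR 0) = Complex.exp (2 * π * α.1 * Complex.I) • E x ∧
    E (x + (2 * π) • stdR 1) = Complex.exp (2 * π * α.2 * Complex.I) • E x

/-- A function on `ℝ²` is `2π`-periodic in each variable. -/
def Per2 (g : ℝ × ℝ → ℝ) : Prop :=
  ∀ x' : ℝ × ℝ, g (x'.1 + 2 * π, x'.2) = g x' ∧ g (x'.1, x'.2 + 2 * π) = g x'

/-- A subset of `ℝ²` is `2π`-biperiodic. -/
def PerSet (S : Set (ℝ × ℝ)) : Prop :=
  ∀ x' : ℝ × ℝ, (x' ∈ S ↔ (x'.1 + 2 * π, x'.2) ∈ S) ∧ (x' ∈ S ↔ (x'.1, x'.2 + 2 * π) ∈ S)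

/-- Partial derivatives of a function on `ℝ²`. -/
def pdR (j : Fin 2) (φ : ℝ × ℝ → ℝ) (x' : ℝ × ℝ) : ℝ :=
  fderiv ℝ φ x' (if j = 0 then (1, 0) else (0, 1))

/-- Area element `√(1+|∇φ|²)` of the graph of `φ`. -/
def areaEl (φ : ℝ × ℝ → ℝ) (x' : ℝ × ℝ) : ℝ :=
  Real.sqrt (1 + (pdR 0 φ x') ^ 2 + (pdR 1 φ x') ^ 2)

/-- Upward unit normal of the graph of `φ`. -/
def nvec (φ : ℝ × ℝ → ℝ) (x' : ℝ × ℝ) : V3 :=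
  (areaEl φ x')⁻¹ • ![-(pdR 0 φ x'), -(pdR 1 φ x'), 1]

/-- The point `(x₁, x₂, φ(x₁,x₂))` on the graph of `φ`. -/
def graphPt (φ : ℝ × ℝ → ℝ) (x' : ℝ × ℝ) : V3 := ![x'.1, x'.2, φ x']

/-- The point `(x₁, x₂, h)`. -/
def pt3 (x' : ℝ × ℝ) (h : ℝ) : V3 := ![x'.1, x'.2, h]

/-- One period cell `(0,2π)²` of `ℝ²`. -/
def cellSq : Set (ℝ × ℝ) := Set.Ioo 0 (2 * π) ×ˢ Set.Ioo 0 (2 * π)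

/-- The outgoing Rayleigh series with coefficients `En`. -/
def rayleighSeries (k₀ : ℝ) (α : ℝ × ℝ) (En : ℤ × ℤ → C3) : V3 → C3 := fun x =>
  ∑' n : ℤ × ℤ,
    Complex.exp (Complex.I * ((rdot (alphaN α n) x : ℝ) + betaN k₀ α n * (x 2 : ℝ))) • En n

/-- The complex direction vector `d = α_m - β_m e₃` of the incident plane wave. -/
def dVec (k₀ : ℝ) (α : ℝ × ℝ) (m : ℤ × ℤ) : C3 :=
  toC3 (alphaN α m) - betaN k₀ α m • stdC 2

/-- `d · x` for `d ∈ ℂ³`, `x ∈ ℝ³`. -/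
def cdotR (d : C3) (x : V3) : ℂ := d 0 * x 0 + d 1 * x 1 + d 2 * x 2

/-- `p_m = p - ((d·p)/k₀²) d`. -/
def pmVec (k₀ : ℝ) (α : ℝ × ℝ) (m : ℤ × ℤ) (p : C3) : C3 :=
  p - (cdot (dVec k₀ α m) p / (k₀ ^ 2 : ℂ)) • dVec k₀ α m

/-- The incident wave `E^i(x) = (1/k₀²) curl curl [p e^{i d·x}]`. -/
def planeInc (k₀ : ℝ) (α : ℝ × ℝ) (m : ℤ × ℤ) (p : C3) : V3 → C3 := fun x =>
  ((k₀ ^ 2 : ℂ))⁻¹ •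
    curl3 (curl3 fun y => Complex.exp (Complex.I * cdotR (dVec k₀ α m) y) • p) x

lemma betaN_im_nonneg (k₀ : ℝ) (α : ℝ × ℝ) (n : ℤ × ℤ) : 0 ≤ (betaN k₀ α n).im := by
  by_cases hc : (α.1 + n.1) ^ 2 + (α.2 + n.2) ^ 2 ≤ k₀ ^ 2
  · simp [betaN, if_pos hc]
  · simp [betaN, if_neg hc, Real.sqrt_nonneg]

lemma betaN_re_nonneg (k₀ : ℝ) (α : ℝ × ℝ) (n : ℤ × ℤ) : 0 ≤ (betaN k₀ α n).re := by
  by_cases hc : (α.1 + n.1) ^ 2 + (α.2 + n.2) ^ 2 ≤ k₀ ^ 2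
  · simp [betaN, if_pos hc, Real.sqrt_nonneg]
  · simp [betaN, if_neg hc]

lemma betaN_cases (k₀ : ℝ) (α : ℝ × ℝ) (m : ℤ × ℤ) (h : betaN k₀ α m ≠ 0) :
    ((betaN k₀ α m).im = 0 ∧ 0 < (betaN k₀ α m).re) ∨
    ((betaN k₀ α m).re = 0 ∧ 0 < (betaN k₀ α m).im) := by
  by_cases hc : (α.1 + m.1) ^ 2 + (α.2 + m.2) ^ 2 ≤ k₀ ^ 2
  · left
    simp only [betaN, if_pos hc] at h ⊢
    refine ⟨by simp, ?_⟩
    simp only [Complex.ofReal_re]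
    rcases (Real.sqrt_nonneg (k₀ ^ 2 - ((α.1 + m.1) ^ 2 + (α.2 + m.2) ^ 2))).lt_or_eq with h1 | h1
    · exact h1
    · exact absurd (by simp [← h1]) h
  · right
    simp only [betaN, if_neg hc] at h ⊢
    refine ⟨by simp, ?_⟩
    simp only [Complex.mul_im, Complex.I_re, Complex.ofReal_im, Complex.I_im, Complex.ofReal_re]
    rcases (Real.sqrt_nonneg ((α.1 + m.1) ^ 2 + (α.2 + m.2) ^ 2 - k₀ ^ 2)).lt_or_eq with h1 | h1
    · simpa using h1
    · exact absurd (by simp [← h1]) h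

lemma norm_exp_I_mul (β : ℂ) (t : ℝ) :
    ‖Complex.exp (Complex.I * (β * (t : ℂ)))‖ = Real.exp (-(β.im * t)) := by
  rw [Complex.norm_exp]
  congr 1
  simp [Complex.mul_re, Complex.mul_im]

lemma rdot_alphaN_vert (α : ℝ × ℝ) (n : ℤ × ℤ) (t : ℝ) :
    rdot (alphaN α n) ![0, 0, t] = 0 := by
  simp [rdot, alphaN]

/-- a nonzero downward-propagating (or downward-evanescent) plane-wave
mode `p_m e^{i(α_m·x - β_m x₃)}` cannot coincide on any upper half-space with a
convergent outgoing Rayleigh series. -/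
theorem statement14 (k₀ : ℝ) (hk₀ : 0 < k₀) (α : ℝ × ℝ) (m : ℤ × ℤ)
    (hβm : betaN k₀ α m ≠ 0) (pm : C3) (hpm : pm ≠ 0) :
    ¬ ∃ (H : ℝ) (En : ℤ × ℤ → C3),
      (∀ H' > H, Summable fun n : ℤ × ℤ =>
        ‖En n‖ * Real.exp (-(betaN k₀ α n).im * H')) ∧
      (∀ x : V3, H < x 2 →
        Complex.exp (Complex.I *
            (((rdot (alphaN α m) x : ℝ) : ℂ) - betaN k₀ α m * ((x 2 : ℝ) : ℂ))) • pm
          = rayleighSeries k₀ α En x) := by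
  rintro ⟨H, En, hsum, heq⟩
  obtain ⟨j, hj⟩ := Function.ne_iff.mp hpm
  set b := betaN k₀ α m with hbdef
  -- Summability of the vector series at height t
  have hS : ∀ t : ℝ, H < t →
      Summable (fun n : ℤ × ℤ => Complex.exp (Complex.I * (betaN k₀ α n * (t : ℂ))) • En n) := by
    intro t ht
    apply Summable.of_norm
    refine (hsum t ht).congr fun n => ?_
    rw [norm_smul, norm_exp_I_mul]
    ring_nf
  -- key scalar identity
  have key : ∀ t : ℝ, H < t →
      Complex.exp (Complex.I * (-(b * (t : ℂ)))) * pm j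
        = ∑' n : ℤ × ℤ, Complex.exp (Complex.I * (betaN k₀ α n * (t : ℂ))) * En n j := by
    intro t ht
    have hx2 : (![0, 0, t] : V3) 2 = t := rfl
    have hx := heq ![0, 0, t] (by rw [hx2]; exact ht)
    simp only [rayleighSeries, rdot_alphaN_vert, hx2, Complex.ofReal_zero, zero_add,
      zero_sub] at hx
    have hx' := congrFun hx j
    rw [tsum_apply (hS t ht)] at hx'
    simpa [Pi.smul_apply, smul_eq_mul] using hx'
  -- norms of scalar terms
  have hterm : ∀ (t : ℝ) (n : ℤ × ℤ),
      ‖Complex.exp (Complex.I * (betaN k₀ α n * (t : ℂ))) * En n j‖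
        ≤ ‖En n‖ * Real.exp (-(betaN k₀ α n).im * t) := by
    intro t n
    rw [norm_mul, norm_exp_I_mul, mul_comm, neg_mul]
    exact mul_le_mul_of_nonneg_right (norm_le_pi_norm (En n) j) (Real.exp_nonneg _)
  have hjpos : (0 : ℝ) < ‖pm j‖ := norm_pos_iff.mpr hj
  rcases betaN_cases k₀ α m hβm with ⟨him, hre⟩ | ⟨hre, him⟩
  · -- propagating case: b real, b.re > 0
    set a := H + 1 with hadef
    have haH : H < a := by simp [hadef]
    -- reformulated key identity
    have key2 : ∀ t : ℝ, H < t →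
        (pm j : ℂ) = ∑' n : ℤ × ℤ,
          Complex.exp (Complex.I * (b + betaN k₀ α n) * (t : ℂ)) * En n j := by
      intro t ht
      have h1 := congrArg (fun z => Complex.exp (Complex.I * (b * (t : ℂ))) * z) (key t ht)
      rw [← mul_assoc, ← Complex.exp_add] at h1
      rw [show Complex.I * (b * (t : ℂ)) + Complex.I * (-(b * (t : ℂ))) = 0 by ring,
        Complex.exp_zero, one_mul] at h1
      rw [h1, ← tsum_mul_left]
      refine tsum_congr fun n => ?_
      rw [← mul_assoc, ← Complex.exp_add]
      congr 2
      ring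
    -- bound for fixed T ≥ a
    have main : ∀ T : ℝ, a ≤ T → (T - a) * ‖pm j‖ ≤
        ∑' n : ℤ × ℤ, (2 / b.re) * (‖En n‖ * Real.exp (-(betaN k₀ α n).im * a)) := by
      intro T hT
      set c : ℤ × ℤ → ℂ := fun n => Complex.I * (b + betaN k₀ α n) with hcdef
      have hcre : ∀ n, b.re ≤ (b + betaN k₀ α n).re := by
        intro n
        simp only [Complex.add_re]
        linarith [betaN_re_nonneg k₀ α n]
      have hcne : ∀ n, c n ≠ 0 := by
        intro n
        simp only [hcdef, mul_ne_zero_iff]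
        refine ⟨Complex.I_ne_zero, ?_⟩
        intro h0
        have := hcre n
        rw [h0] at this
        simp at this
        linarith
      set F : ℤ × ℤ → ℝ → ℂ := fun n t => Complex.exp (c n * (t : ℂ)) * En n j with hFdef
      have hFcont : ∀ n, Continuous (F n) := by
        intro n
        exact (Complex.continuous_exp.comp ((continuous_const.mul Complex.continuous_ofReal))).mul
          continuous_const
      have hInt : ∀ n, IntegrableOn (F n) (Set.Ioc a T) volume := fun n =>
        (hFcont n).integrableOn_Ioc
      have hFnorm : ∀ n (t : ℝ), a ≤ t →
          ‖F n t‖ ≤ ‖En n‖ * Real.exp (-(betaN k₀ α n).im * a) := by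
        intro n t ht
        have : F n t = Complex.exp (Complex.I * ((b + betaN k₀ α n) * (t : ℂ))) * En n j := by
          simp only [hFdef, hcdef]; ring_nf
        rw [this, norm_mul, norm_exp_I_mul]
        have him2 : (b + betaN k₀ α n).im = (betaN k₀ α n).im := by
          rw [Complex.add_im, show b.im = 0 from him, zero_add]
        rw [him2]
        have h2 : Real.exp (-((betaN k₀ α n).im * t)) ≤ Real.exp (-((betaN k₀ α n).im * a)) := by
          apply Real.exp_le_exp.mpr
          have := betaN_im_nonneg k₀ α n
          nlinarith
        calc Real.exp (-((betaN k₀ α n).im * t)) * ‖En n j‖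
            ≤ Real.exp (-((betaN k₀ α n).im * a)) * ‖En n‖ := by
              apply mul_le_mul h2 (norm_le_pi_norm (En n) j) (norm_nonneg _) (Real.exp_nonneg _)
          _ = ‖En n‖ * Real.exp (-(betaN k₀ α n).im * a) := by rw [mul_comm, neg_mul]
      have hvol : (volume (Set.Ioc a T)).toReal = T - a := by
        rw [Real.volume_Ioc, ENNReal.toReal_ofReal (by linarith)]
      have hIntNorm : ∀ n, ∫ t in Set.Ioc a T, ‖F n t‖ ∂volume
          ≤ (T - a) * (‖En n‖ * Real.exp (-(betaN k₀ α n).im * a)) := by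
        intro n
        have h1 : ∫ t in Set.Ioc a T, ‖F n t‖ ∂volume
            ≤ ∫ _ in Set.Ioc a T, (‖En n‖ * Real.exp (-(betaN k₀ α n).im * a)) ∂volume := by
          apply setIntegral_mono_on (hInt n).norm
          · exact (integrableOn_const_iff (by finiteness)).mpr (Or.inr (by rw [Real.volume_Ioc]; exact ENNReal.ofReal_lt_top))
          · exact measurableSet_Ioc
          · exact fun t ht => hFnorm n t ht.1.le
        rwa [setIntegral_const, measureReal_def, hvol, smul_eq_mul] at h1
      have hSumM : Summable fun n : ℤ × ℤ => ‖En n‖ * Real.exp (-(betaN k₀ α n).im * a) :=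
        hsum a haH
      have hSumInt : Summable fun n : ℤ × ℤ => ∫ t in Set.Ioc a T, ‖F n t‖ ∂volume := by
        apply Summable.of_nonneg_of_le (fun n => integral_nonneg fun t => norm_nonneg _)
          (fun n => hIntNorm n) (hSumM.mul_left (T - a))
      have hHas : HasSum (fun n : ℤ × ℤ => ∫ t in Set.Ioc a T, F n t ∂volume)
          (∫ t in Set.Ioc a T, (∑' n : ℤ × ℤ, F n t) ∂volume) :=
        hasSum_integral_of_summable_integral_norm hInt hSumInt
      have hintconst : (∫ t in Set.Ioc a T, (∑' n : ℤ × ℤ, F n t) ∂volume)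
          = ((T - a) : ℝ) • (pm j : ℂ) := by
        rw [setIntegral_congr_fun measurableSet_Ioc
          (fun t (ht : t ∈ Set.Ioc a T) => (key2 t (lt_of_lt_of_le haH ht.1.le)).symm)]
        rw [setIntegral_const, measureReal_def, hvol]
      -- value of each integral
      have hval : ∀ n, ∫ t in Set.Ioc a T, F n t ∂volume
          = (Complex.exp (c n * (T : ℂ)) - Complex.exp (c n * (a : ℂ))) / c n * En n j := by
        intro n
        rw [← intervalIntegral.integral_of_le hT]
        rw [intervalIntegral.integral_mul_const, integral_exp_mul_complex (hcne n)]
      have hnormexp : ∀ n (t : ℝ), a ≤ t →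
          ‖Complex.exp (c n * (t : ℂ))‖ ≤ Real.exp (-(betaN k₀ α n).im * a) := by
        intro n t ht
        have : c n * (t : ℂ) = Complex.I * ((b + betaN k₀ α n) * (t : ℂ)) := by
          rw [hcdef]; ring
        rw [this, norm_exp_I_mul]
        apply Real.exp_le_exp.mpr
        have h1 : (b + betaN k₀ α n).im = (betaN k₀ α n).im := by
          rw [Complex.add_im, show b.im = 0 from him, zero_add]
        rw [h1]
        have := betaN_im_nonneg k₀ α n
        nlinarith
      have hcabs : ∀ n, b.re ≤ ‖c n‖ := by
        intro n
        have h1 : ‖c n‖ = ‖b + betaN k₀ α n‖ := by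
          rw [hcdef, norm_mul, Complex.norm_I, one_mul]
        rw [h1]
        exact le_trans (hcre n) (Complex.re_le_norm _)
      have hbound : ∀ n, ‖∫ t in Set.Ioc a T, F n t ∂volume‖
          ≤ (2 / b.re) * (‖En n‖ * Real.exp (-(betaN k₀ α n).im * a)) := by
        intro n
        rw [hval n, norm_mul, norm_div]
        have h1 : ‖Complex.exp (c n * (T : ℂ)) - Complex.exp (c n * (a : ℂ))‖
            ≤ 2 * Real.exp (-(betaN k₀ α n).im * a) := by
          calc _ ≤ ‖Complex.exp (c n * (T : ℂ))‖ + ‖Complex.exp (c n * (a : ℂ))‖ :=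
                norm_sub_le _ _
            _ ≤ _ := by
                have := hnormexp n T hT
                have := hnormexp n a le_rfl
                linarith
        have h2 : ‖En n j‖ ≤ ‖En n‖ := norm_le_pi_norm (En n) j
        have h3 : (0 : ℝ) < ‖c n‖ := lt_of_lt_of_le hre (hcabs n)
        have h4 : ‖Complex.exp (c n * (T : ℂ)) - Complex.exp (c n * (a : ℂ))‖ / ‖c n‖
            ≤ 2 * Real.exp (-(betaN k₀ α n).im * a) / b.re :=
          div_le_div₀ (by positivity) h1 hre (hcabs n)
        calc ‖Complex.exp (c n * (T : ℂ)) - Complex.exp (c n * (a : ℂ))‖ / ‖c n‖ * ‖En n j‖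
            ≤ 2 * Real.exp (-(betaN k₀ α n).im * a) / b.re * ‖En n‖ := by
              apply mul_le_mul h4 h2 (norm_nonneg _) (by positivity)
          _ = (2 / b.re) * (‖En n‖ * Real.exp (-(betaN k₀ α n).im * a)) := by ring
      have hSumNorm : Summable fun n : ℤ × ℤ => ‖∫ t in Set.Ioc a T, F n t ∂volume‖ :=
        Summable.of_nonneg_of_le (fun n => norm_nonneg _) hbound (hSumM.mul_left (2 / b.re))
      have h5 : ‖((T - a) : ℝ) • (pm j : ℂ)‖ ≤
          ∑' n : ℤ × ℤ, (2 / b.re) * (‖En n‖ * Real.exp (-(betaN k₀ α n).im * a)) := by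
        rw [← hintconst, ← hHas.tsum_eq]
        exact le_trans (norm_tsum_le_tsum_norm hSumNorm)
          (hSumNorm.tsum_le_tsum hbound (hSumM.mul_left (2 / b.re)))
      rw [norm_smul, Real.norm_eq_abs, abs_of_nonneg (by linarith)] at h5
      exact h5
    -- contradiction as T → ∞
    set C := ∑' n : ℤ × ℤ, (2 / b.re) * (‖En n‖ * Real.exp (-(betaN k₀ α n).im * a)) with hCdef
    have htend : Filter.Tendsto (fun T : ℝ => (T - a) * ‖pm j‖) Filter.atTop Filter.atTop :=
      (Filter.tendsto_atTop_add_const_right _ (-a) Filter.tendsto_id).atTop_mul_const hjpos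
    obtain ⟨T, hT1, hT2⟩ :=
      ((htend.eventually_gt_atTop C).and (Filter.eventually_ge_atTop a)).exists
    exact absurd (main T hT2) (not_le.mpr hT1)
  · -- evanescent case: b = i·β, b.im > 0
    set a := H + 1 with hadef
    have haH : H < a := by simp [hadef]
    have hSumM : Summable fun n : ℤ × ℤ => ‖En n‖ * Real.exp (-(betaN k₀ α n).im * a) :=
      hsum a haH
    set C := ∑' n : ℤ × ℤ, ‖En n‖ * Real.exp (-(betaN k₀ α n).im * a) with hCdef
    have main : ∀ t : ℝ, a ≤ t → Real.exp (b.im * t) * ‖pm j‖ ≤ C := by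
      intro t ht
      have htH : H < t := lt_of_lt_of_le haH ht
      have hsum_t : Summable fun n : ℤ × ℤ =>
          ‖Complex.exp (Complex.I * (betaN k₀ α n * (t : ℂ))) * En n j‖ := by
        apply Summable.of_nonneg_of_le (fun n => norm_nonneg _) (fun n => hterm t n)
          (hsum t htH)
      have hterm2 : ∀ n : ℤ × ℤ,
          ‖Complex.exp (Complex.I * (betaN k₀ α n * (t : ℂ))) * En n j‖
            ≤ ‖En n‖ * Real.exp (-(betaN k₀ α n).im * a) := by
        intro n
        refine le_trans (hterm t n) ?_
        apply mul_le_mul_of_nonneg_left _ (norm_nonneg _)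
        apply Real.exp_le_exp.mpr
        have := betaN_im_nonneg k₀ α n
        nlinarith
      have hlhs : ‖Complex.exp (Complex.I * (-(b * (t : ℂ)))) * pm j‖
          = Real.exp (b.im * t) * ‖pm j‖ := by
        rw [norm_mul]
        congr 1
        have : Complex.I * (-(b * (t : ℂ))) = Complex.I * ((-b) * (t : ℂ)) := by ring
        rw [this, norm_exp_I_mul]
        congr 1
        simp
      calc Real.exp (b.im * t) * ‖pm j‖
          = ‖Complex.exp (Complex.I * (-(b * (t : ℂ)))) * pm j‖ := hlhs.symm
        _ = ‖∑' n : ℤ × ℤ, Complex.exp (Complex.I * (betaN k₀ α n * (t : ℂ))) * En n j‖ := by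
            rw [key t htH]
        _ ≤ ∑' n : ℤ × ℤ, ‖Complex.exp (Complex.I * (betaN k₀ α n * (t : ℂ))) * En n j‖ :=
            norm_tsum_le_tsum_norm hsum_t
        _ ≤ C := hsum_t.tsum_le_tsum hterm2 hSumM
    have htend : Filter.Tendsto (fun t : ℝ => Real.exp (b.im * t) * ‖pm j‖)
        Filter.atTop Filter.atTop := by
      apply Filter.Tendsto.atTop_mul_const hjpos
      exact Real.tendsto_exp_atTop.comp (Filter.tendsto_id.const_mul_atTop him)
    obtain ⟨t, ht1, ht2⟩ :=
      ((htend.eventually_gt_atTop C).and (Filter.eventually_ge_atTop a)).exists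
    exact absurd (main t ht2) (not_le.mpr ht1)
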